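/- arXiv:0707.3914 — 4 statements merged into one kernel-verified Lean document; each statement's English description precedes it below -/
import Mathlib

section
/- Let H be a group, U and U' subgroups of H with U ∩ U' of index two in U, say U = (U ∩ U') ∪ σ(U ∩ U') for some σ ∈ U. Assume that for every N ≥ 1 and every τ_1, …, τ_N ∈ U'σ ∖ U one has τ_1 ⋯ τ_N ≠ 1. Then for any field E the H-equivariant linear map E[H/U] → E[H/U'] sending the class [ξ] to [ξσ] + [ξ] is injective. -/
private theorem tele_aux {G : Type*} [Group G] (n : ℕ) : ∀ a : ℕ → G,
    (List.ofFn (fun i : Fin n => (a ↑i)⁻¹ * a (↑i + 1))).prod = (a 0)⁻¹ * a n := by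
  induction n with
  | zero => simp
  | succ k ih =>
    intro a
    rw [List.ofFn_succ, List.prod_cons]
    have h2 := ih (fun j => a (j + 1))
    have h3 : (fun i : Fin k => ((fun i : Fin (k+1) => (a ↑i)⁻¹ * a (↑i + 1)) i.succ))
        = fun i : Fin k => (a (↑i + 1))⁻¹ * a (↑i + 1 + 1) := by
      funext i; simp [Fin.val_succ]
    rw [h3]
    rw [h2]
    simp only [Fin.val_zero, Nat.zero_add]
    rw [← mul_assoc, mul_assoc _ _ (a 1)⁻¹, mul_inv_cancel, mul_one]

/-- if `U ∩ U'` has index two in `U`, `U = (U ∩ U') ∪ σ(U ∩ U')`, and no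
nonempty product of elements of `U'σ ∖ U` equals `1`, then the `H`-equivariant map
`E[H/U] → E[H/U']`, `[ξ] ↦ [ξσ] + [ξ]`, is injective. -/
theorem stmt_1 {H : Type*} [Group H] (E : Type*) [Field E]
    (U U' : Subgroup H) (σ : H)
    (hσU : σ ∈ U) (hσU' : σ ∉ U')
    (hcover : ∀ u ∈ U, u ∈ U ⊓ U' ∨ ∃ v ∈ U ⊓ U', u = σ * v)
    (hprod : ∀ (N : ℕ) (τ : Fin (N + 1) → H),
      (∀ i, (∃ v ∈ U', τ i = v * σ) ∧ τ i ∉ U) → (List.ofFn τ).prod ≠ 1)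
    (Φ : ((H ⧸ U) →₀ E) →ₗ[E] ((H ⧸ U') →₀ E))
    (hΦ : ∀ ξ : H, Φ (Finsupp.single (ξ : H ⧸ U) 1) =
      Finsupp.single ((ξ * σ : H) : H ⧸ U') 1 + Finsupp.single ((ξ : H) : H ⧸ U') 1) :
    Function.Injective Φ := by
  classical
  -- preliminary group facts
  have hconj : ∀ k ∈ U ⊓ U', σ * k * σ⁻¹ ∈ U ⊓ U' := by
    intro k hk
    have hkU : σ * k * σ⁻¹ ∈ U := mul_mem (mul_mem hσU hk.1) (inv_mem hσU)
    rcases hcover _ hkU with h | ⟨v, hv, he⟩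
    · exact h
    · exfalso
      apply hσU'
      rw [mul_assoc] at he
      have h1 : k * σ⁻¹ = v := mul_left_cancel he
      have h2 : σ⁻¹ = k⁻¹ * v := by rw [← h1]; group
      have h3 : σ⁻¹ ∈ U' := by rw [h2]; exact mul_mem (inv_mem hk.2) hv.2
      simpa using inv_mem h3
  -- injectivity via kernel
  intro a b hab
  by_contra hne
  set x : (H ⧸ U) →₀ E := a - b with hxdef
  have hx0 : Φ x = 0 := by rw [map_sub, hab, sub_self]
  have hxne : x ≠ 0 := sub_ne_zero.mpr hne
  -- the key step lemma
  have key : ∀ g : H, (↑g : H ⧸ U) ∈ x.support → ∃ s : H, (↑s : H ⧸ U) ∈ x.support ∧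
      ((s : H ⧸ U') = (g : H ⧸ U')) ∧ g⁻¹ * s ∉ U := by
    intro g hg
    by_contra hcon
    push_neg at hcon
    set ρ : H ⧸ U' := (g : H ⧸ U') with hρ
    have hsum : Φ x = ∑ q ∈ x.support, x q •
        (Finsupp.single ((Quotient.out q * σ : H) : H ⧸ U') 1
          + Finsupp.single ((Quotient.out q : H) : H ⧸ U') 1) := by
      conv_lhs => rw [← Finsupp.sum_single x]
      rw [Finsupp.sum, map_sum]
      refine Finset.sum_congr rfl fun q hq => ?_
      have h1 : Finsupp.single q (x q) = x q • Finsupp.single q (1:E) := by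
        rw [Finsupp.smul_single, smul_eq_mul, mul_one]
      rw [h1, map_smul]
      have h2 := hΦ (Quotient.out q)
      rw [QuotientGroup.out_eq'] at h2
      rw [h2]
    rw [hx0] at hsum
    have h0 := DFunLike.congr_fun hsum ρ
    simp only [Finsupp.coe_zero, Pi.zero_apply, Finsupp.finset_sum_apply, Finsupp.smul_apply,
      Finsupp.add_apply, Finsupp.single_apply, smul_eq_mul] at h0
    have hsum_eq : (∑ q ∈ x.support, x q *
        ((if ((Quotient.out q * σ : H) : H ⧸ U') = ρ then (1:E) else 0)
          + if ((Quotient.out q : H) : H ⧸ U') = ρ then (1:E) else 0)) = x (g : H ⧸ U) := by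
      rw [Finset.sum_eq_single ((g : H ⧸ U) : H ⧸ U)]
      · set r := Quotient.out ((g : H ⧸ U)) with hr
        have hrg : ((r : H) : H ⧸ U) = (g : H ⧸ U) := QuotientGroup.out_eq' _
        have hu : r⁻¹ * g ∈ U := QuotientGroup.eq.mp hrg
        rcases hcover _ hu with hk | ⟨v, hv, he⟩
        · have h2 : ((r : H) : H ⧸ U') = ρ := QuotientGroup.eq.mpr hk.2
          have h1 : ¬ (((r * σ : H) : H ⧸ U') = ρ) := by
            intro h
            have h' : (r * σ)⁻¹ * g ∈ U' := QuotientGroup.eq.mp h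
            apply hσU'
            have hσinv : σ⁻¹ ∈ U' := by
              have heq : σ⁻¹ = ((r * σ)⁻¹ * g) * (r⁻¹ * g)⁻¹ := by group
              rw [heq]; exact mul_mem h' (inv_mem hk.2)
            simpa using inv_mem hσinv
          rw [if_pos h2, if_neg h1]; ring
        · have h2 : ¬ (((r : H) : H ⧸ U') = ρ) := by
            intro h
            apply hσU'
            have h' : r⁻¹ * g ∈ U' := QuotientGroup.eq.mp h
            have heq : σ = (r⁻¹ * g) * v⁻¹ := by rw [he]; group
            rw [heq]; exact mul_mem h' (inv_mem hv.2)
          have h1 : ((r * σ : H) : H ⧸ U') = ρ := by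
            apply QuotientGroup.eq.mpr
            have heq : (r * σ)⁻¹ * g = σ⁻¹ * (r⁻¹ * g) := by group
            rw [heq, he]
            have heq2 : σ⁻¹ * (σ * v) = v := by group
            rw [heq2]; exact hv.2
          rw [if_pos h1, if_neg h2]; ring
      · intro q hq hqne
        have hA : ¬ (((Quotient.out q : H) : H ⧸ U') = ρ) := by
          intro h
          apply hqne
          have hs := hcon (Quotient.out q) (by rw [QuotientGroup.out_eq']; exact hq) h
          have h' : ((Quotient.out q : H) : H ⧸ U) = (g : H ⧸ U) := (QuotientGroup.eq.mpr hs).symm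
          rw [← QuotientGroup.out_eq' q, h']
        have hB : ¬ ((((Quotient.out q) * σ : H) : H ⧸ U') = ρ) := by
          intro h
          apply hqne
          have hs := hcon ((Quotient.out q) * σ)
            (by rw [QuotientGroup.mk_mul_of_mem _ hσU, QuotientGroup.out_eq']; exact hq) h
          have h' : (((Quotient.out q) * σ : H) : H ⧸ U) = (g : H ⧸ U) :=
            (QuotientGroup.eq.mpr hs).symm
          rw [← QuotientGroup.out_eq' q, ← QuotientGroup.mk_mul_of_mem (Quotient.out q) hσU, h']
        rw [if_neg hA, if_neg hB]; ring
      · intro h; exact absurd hg h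
    rw [hsum_eq] at h0
    exact (Finsupp.mem_support_iff.mp hg) h0.symm
  -- build the infinite walk
  obtain ⟨q₁, hq₁⟩ := Finsupp.support_nonempty_iff.mpr hxne
  let F : {g : H // (↑g : H ⧸ U) ∈ x.support} → {g : H // (↑g : H ⧸ U) ∈ x.support} :=
    fun p => ⟨(key p.1 p.2).choose * σ, by
      rw [QuotientGroup.mk_mul_of_mem _ hσU]
      exact (key p.1 p.2).choose_spec.1⟩
  let gg : ℕ → {g : H // (↑g : H ⧸ U) ∈ x.support} :=
    fun n => F^[n] ⟨Quotient.out q₁, by rw [QuotientGroup.out_eq']; exact hq₁⟩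
  have hgg : ∀ n, gg (n+1) = F (gg n) := fun n => Function.iterate_succ_apply' F n _
  have hstep : ∀ n, (∃ v ∈ U', (gg n).1⁻¹ * (gg (n+1)).1 = v * σ)
      ∧ ((gg n).1⁻¹ * (gg (n+1)).1 ∉ U) := by
    intro n
    obtain ⟨hs1, hs2, hs3⟩ := (key (gg n).1 (gg n).2).choose_spec
    set s := (key (gg n).1 (gg n).2).choose with hsdef
    have he : (gg (n+1)).1 = s * σ := by rw [hgg n]
    constructor
    · refine ⟨(gg n).1⁻¹ * s, QuotientGroup.eq.mp hs2.symm, ?_⟩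
      rw [he]; group
    · rw [he]
      intro hU
      apply hs3
      have heq : (gg n).1⁻¹ * s = ((gg n).1⁻¹ * (s * σ)) * σ⁻¹ := by group
      rw [heq]; exact mul_mem hU (inv_mem hσU)
  -- pigeonhole
  let bit : ℕ → Bool := fun n => decide ((Quotient.out (((gg n).1 : H) : H ⧸ U))⁻¹ * (gg n).1 ∈ U')
  let f : ℕ → {q : H ⧸ U // q ∈ x.support} × Bool :=
    fun n => (⟨(((gg n).1 : H) : H ⧸ U), (gg n).2⟩, bit n)
  obtain ⟨a', b', hab', hfab⟩ := Finite.exists_ne_map_eq_of_infinite f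
  obtain ⟨m, n, hmn, hf⟩ : ∃ m n, m < n ∧ f m = f n := by
    rcases lt_or_gt_of_ne hab' with h | h
    exacts [⟨a', b', h, hfab⟩, ⟨b', a', h, hfab.symm⟩]
  have hq : (((gg m).1 : H) : H ⧸ U) = (((gg n).1 : H) : H ⧸ U) :=
    congrArg (fun p => p.1.1) hf
  have hbit : bit m = bit n := congrArg Prod.snd hf
  set r := Quotient.out (((gg m).1 : H) : H ⧸ U) with hrdef
  have hrm : r⁻¹ * (gg m).1 ∈ U := QuotientGroup.eq.mp (QuotientGroup.out_eq' _)
  have hrn : r⁻¹ * (gg n).1 ∈ U := by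
    have : ((r : H) : H ⧸ U) = (((gg n).1 : H) : H ⧸ U) := by
      rw [hrdef, QuotientGroup.out_eq', hq]
    exact QuotientGroup.eq.mp this
  have hbit' : (r⁻¹ * (gg m).1 ∈ U') ↔ (r⁻¹ * (gg n).1 ∈ U') := by
    have e1 : bit m = decide (r⁻¹ * (gg m).1 ∈ U') := rfl
    have e2 : bit n = decide (r⁻¹ * (gg n).1 ∈ U') := by
      simp only [bit, hrdef, ← hq]
    rw [e1, e2] at hbit
    exact decide_eq_decide.mp hbit
  have hw : (gg m).1⁻¹ * (gg n).1 ∈ U ⊓ U' := by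
    rcases em (r⁻¹ * (gg m).1 ∈ U') with hm' | hm'
    · have hn' := hbit'.mp hm'
      have heq : (gg m).1⁻¹ * (gg n).1 = (r⁻¹ * (gg m).1)⁻¹ * (r⁻¹ * (gg n).1) := by group
      rw [Subgroup.mem_inf, heq]
      exact ⟨mul_mem (inv_mem hrm) hrn, mul_mem (inv_mem hm') hn'⟩
    · have hn' : ¬ (r⁻¹ * (gg n).1 ∈ U') := fun h => hm' (hbit'.mpr h)
      rcases hcover _ hrm with hk | ⟨v₁, hv₁, he₁⟩
      · exact absurd hk.2 hm'
      rcases hcover _ hrn with hk | ⟨v₂, hv₂, he₂⟩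
      · exact absurd hk.2 hn'
      have h1 : (gg m).1 = r * (σ * v₁) := by rw [← he₁]; group
      have h2 : (gg n).1 = r * (σ * v₂) := by rw [← he₂]; group
      have heq : (gg m).1⁻¹ * (gg n).1 = v₁⁻¹ * v₂ := by rw [h1, h2]; group
      rw [heq]
      exact mul_mem (inv_mem hv₁) hv₂
  set w := (gg m).1⁻¹ * (gg n).1 with hwdef
  set N := n - m - 1 with hN
  have hmN : m + N + 1 = n := by omega
  let A : ℕ → H := fun i => if i = N + 1 then (gg m).1 else (gg (m + i)).1
  let τ : Fin (N+1) → H := fun i => (A ↑i)⁻¹ * A (↑i + 1)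
  refine hprod N τ ?_ ?_
  · intro i
    rcases eq_or_lt_of_le (Nat.lt_succ_iff.mp i.2) with hi | hi
    · -- last index: ↑i = N
      have hA1 : A ↑i = (gg (m + N)).1 := by
        simp only [A, hi, if_neg (Nat.ne_of_lt (Nat.lt_succ_self N))]
      have hA2 : A (↑i + 1) = (gg m).1 := by
        simp only [A, hi, if_pos rfl]
      have hτ : τ i = ((gg (m + N)).1⁻¹ * (gg (m + N + 1)).1) * w⁻¹ := by
        show (A ↑i)⁻¹ * A (↑i + 1) = _
        rw [hA1, hA2, hmN, hwdef]; group
      obtain ⟨⟨v, hvU', hvτ⟩, hτU⟩ := hstep (m + N)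
      constructor
      · refine ⟨v * (σ * w⁻¹ * σ⁻¹), mul_mem hvU' (hconj _ (inv_mem hw)).2, ?_⟩
        rw [hτ, hvτ]; group
      · rw [hτ]
        intro hmem
        apply hτU
        have heq : (gg (m + N)).1⁻¹ * (gg (m + N + 1)).1
            = (((gg (m + N)).1⁻¹ * (gg (m + N + 1)).1) * w⁻¹) * w := by group
        rw [heq]
        exact mul_mem hmem hw.1
    · -- ↑i < N
      have hA1 : A ↑i = (gg (m + ↑i)).1 := by
        simp only [A, if_neg (by omega : (↑i : ℕ) ≠ N + 1)]
      have hA2 : A (↑i + 1) = (gg (m + ↑i + 1)).1 := by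
        simp only [A, if_neg (by omega : (↑i : ℕ) + 1 ≠ N + 1)]
        rfl
      have hτ : τ i = (gg (m + ↑i)).1⁻¹ * (gg (m + ↑i + 1)).1 := by
        show (A ↑i)⁻¹ * A (↑i + 1) = _
        rw [hA1, hA2]
      rw [hτ]
      exact hstep (m + ↑i)
  · have ht := tele_aux (N+1) A
    have hA0 : A 0 = (gg m).1 := by
      simp only [A, if_neg (by omega : (0:ℕ) ≠ N + 1), Nat.add_zero]
    have hAN : A (N+1) = (gg m).1 := by simp only [A, if_pos rfl]
    show (List.ofFn τ).prod = 1
    rw [show (List.ofFn τ) = List.ofFn (fun i : Fin (N+1) => (A ↑i)⁻¹ * A (↑i + 1)) from rfl,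
      ht, hA0, hAN, inv_mul_cancel]
end

section
/- Let H be a group, U a subgroup, and g_1, …, g_N involutions in the quotient N_H(U)/U (where N_H(U) is the normalizer of U in H) generating an infinite subgroup of N_H(U)/U. Then for any field E the natural H-equivariant map E[H/U] → ⊕_{j=1}^N E[H/⟨U, g_j⟩] (each component induced by the quotient map H/U → H/⟨U,g_j⟩) is injective. -/
/-- Membership in `U ⊔ ⟨g⟩` when `g` normalizes `U` and `g² ∈ U`. -/
lemma stmt2_aux_mem_sup {H : Type*} [Group H] (U : Subgroup H) (g : H)
    (hn : g ∈ Subgroup.normalizer (U : Set H)) (h2 : g ^ 2 ∈ U) (v : H) :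
    v ∈ U ⊔ Subgroup.closure {g} ↔ v ∈ U ∨ v * g ∈ U := by
  have hconj : ∀ u ∈ U, g * u * g⁻¹ ∈ U := fun u hu =>
    (Subgroup.mem_normalizer_iff.mp hn u).mp hu
  have hconj' : ∀ u ∈ U, g⁻¹ * u * g ∈ U := by
    intro u hu
    have := (Subgroup.mem_normalizer_iff.mp ((Subgroup.normalizer (U : Set H)).inv_mem hn) u).mp hu
    simpa using this
  have h2' : (g ^ 2)⁻¹ ∈ U := U.inv_mem h2
  constructor
  · intro hv
    have hrw : U ⊔ Subgroup.closure {g} = Subgroup.closure ((U : Set H) ∪ {g}) := by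
      rw [Subgroup.closure_union, Subgroup.closure_eq]
    rw [hrw] at hv
    refine Subgroup.closure_induction (p := fun v _ => v ∈ U ∨ v * g ∈ U) ?_ ?_ ?_ ?_ hv
    · rintro x (hx | rfl)
      · exact Or.inl hx
      · exact Or.inr (by simpa [← pow_two] using h2)
    · exact Or.inl U.one_mem
    · rintro x y _ _ (hx | hx) (hy | hy)
      · exact Or.inl (U.mul_mem hx hy)
      · exact Or.inr (by rw [mul_assoc]; exact U.mul_mem hx hy)
      · refine Or.inr ?_
        have : x * y * g = (x * g) * (g⁻¹ * y * g) := by group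
        rw [this]; exact U.mul_mem hx (hconj' y hy)
      · refine Or.inl ?_
        have : x * y = (x * g) * (g⁻¹ * (y * g) * g) * (g ^ 2)⁻¹ := by group
        rw [this]
        exact U.mul_mem (U.mul_mem hx (hconj' _ hy)) h2'
    · rintro x _ (hx | hx)
      · exact Or.inl (U.inv_mem hx)
      · refine Or.inr ?_
        have : x⁻¹ * g = g ^ 2 * (g⁻¹ * (x * g)⁻¹ * g) := by group
        rw [this]
        exact U.mul_mem h2 (hconj' _ (U.inv_mem hx))
  · rintro (hv | hv)
    · exact Subgroup.mem_sup_left hv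
    · have hg : g ∈ U ⊔ Subgroup.closure {g} :=
        Subgroup.mem_sup_right (Subgroup.subset_closure rfl)
      have : v = (v * g) * g⁻¹ := by group
      rw [this]
      exact Subgroup.mul_mem _ (Subgroup.mem_sup_left hv) (Subgroup.inv_mem _ hg)

/-- if `g₁, …, g_N` are involutions in `N_H(U)/U` generating an infinite
subgroup, then the natural map `E[H/U] → ⊕_j E[H/⟨U, g_j⟩]` is injective. -/
theorem stmt_2 {H : Type*} [Group H] (E : Type*) [Field E]
    (U : Subgroup H) (N : ℕ) (g : Fin N → H)
    (hnorm : ∀ j, g j ∈ Subgroup.normalizer (U : Set H))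
    (hinv : ∀ j, (g j) ^ 2 ∈ U)
    (hinf : Set.Infinite ((fun h : H => (h : H ⧸ U)) ''
      ((Subgroup.closure (Set.range g) : Subgroup H) : Set H)))
    (φ : ∀ j : Fin N, H ⧸ U → H ⧸ (U ⊔ Subgroup.closure {g j}))
    (hφ : ∀ j (h : H), φ j (h : H ⧸ U) = (h : H ⧸ (U ⊔ Subgroup.closure {g j}))) :
    Function.Injective (fun x : (H ⧸ U) →₀ E => fun j => Finsupp.mapDomain (φ j) x) := by
  classical
  intro x y hxy
  rw [← sub_eq_zero]
  by_contra hne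
  set d : (H ⧸ U) →₀ E := x - y with hd
  have hmapd : ∀ j, Finsupp.mapDomain (φ j) d = 0 := by
    intro j
    have h1 : Finsupp.mapDomain (φ j) x = Finsupp.mapDomain (φ j) y := congrFun hxy j
    have : Finsupp.lmapDomain E E (φ j) d = 0 := by
      rw [hd, map_sub]
      simp only [Finsupp.lmapDomain_apply, h1, sub_self]
    simpa [Finsupp.lmapDomain_apply] using this
  -- evaluation of mapDomain
  have heval : ∀ (j : Fin N) (b : H ⧸ (U ⊔ Subgroup.closure {g j})),
      ∑ a ∈ d.support.filter (fun a => φ j a = b), d a = 0 := by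
    intro j b
    have h0 : (Finsupp.mapDomain (φ j) d) b = 0 := by rw [hmapd j]; rfl
    have h1 : (Finsupp.mapDomain (φ j) d) b
        = ∑ a ∈ d.support, if φ j a = b then d a else 0 := by
      rw [Finsupp.mapDomain, Finsupp.sum_apply, Finsupp.sum]
      refine Finset.sum_congr rfl fun a _ => ?_
      rw [Finsupp.single_apply]
    rw [Finset.sum_filter, ← h1, h0]
  -- support stability under right multiplication by a generator
  have hstep : ∀ (j : Fin N) (h : H), ((h : H ⧸ U) ∈ d.support) →
      (((h * g j : H) : H ⧸ U) ∈ d.support) := by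
    intro j h hh
    by_cases hcase : ((h * g j : H) : H ⧸ U) = (h : H ⧸ U)
    · rwa [hcase]
    · by_contra hnot
      have hfib : ∀ a : H ⧸ U, φ j a = φ j (h : H ⧸ U) ↔
          (a = (h : H ⧸ U) ∨ a = ((h * g j : H) : H ⧸ U)) := by
        intro a
        obtain ⟨h', rfl⟩ := QuotientGroup.mk_surjective a
        rw [hφ, hφ, QuotientGroup.eq, QuotientGroup.eq, QuotientGroup.eq,
          stmt2_aux_mem_sup U (g j) (hnorm j) (hinv j), ← mul_assoc]
      have hfil : d.support.filter (fun a => φ j a = φ j (h : H ⧸ U))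
          = {((h : H ⧸ U))} := by
        refine Finset.eq_singleton_iff_unique_mem.mpr ⟨Finset.mem_filter.mpr ⟨hh, rfl⟩, ?_⟩
        intro a ha
        obtain ⟨has, hfa⟩ := Finset.mem_filter.mp ha
        rcases (hfib a).mp hfa with h1 | h2
        · exact h1
        · exact absurd (h2 ▸ has) hnot
      have := heval j (φ j (h : H ⧸ U))
      rw [hfil, Finset.sum_singleton] at this
      exact (Finsupp.mem_support_iff.mp hh) this
  -- support stability under the whole closure
  have hclos : ∀ w ∈ Subgroup.closure (Set.range g), ∀ h : H,
      ((h : H ⧸ U) ∈ d.support) →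
      (((h * w : H) : H ⧸ U) ∈ d.support ∧ ((h * w⁻¹ : H) : H ⧸ U) ∈ d.support) := by
    intro w hw
    refine Subgroup.closure_induction
      (p := fun w _ => ∀ h : H, ((h : H ⧸ U) ∈ d.support) →
        (((h * w : H) : H ⧸ U) ∈ d.support ∧ ((h * w⁻¹ : H) : H ⧸ U) ∈ d.support))
      ?_ ?_ ?_ ?_ hw
    · rintro _ ⟨j, rfl⟩ h hh
      refine ⟨hstep j h hh, ?_⟩
      have : ((h * (g j)⁻¹ : H) : H ⧸ U) = ((h * g j : H) : H ⧸ U) := by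
        rw [QuotientGroup.eq]
        have : (h * (g j)⁻¹)⁻¹ * (h * g j) = g j * g j := by group
        rw [this, ← pow_two]
        exact hinv j
      rw [this]
      exact hstep j h hh
    · intro h hh; simpa using hh
    · intro a b _ _ pa pb h hh
      constructor
      · have : h * (a * b) = (h * a) * b := by rw [mul_assoc]
        rw [this]
        exact (pb (h * a) (pa h hh).1).1
      · have : h * (a * b)⁻¹ = (h * b⁻¹) * a⁻¹ := by group
        rw [this]
        exact (pa (h * b⁻¹) (pb h hh).2).2
    · intro a _ pa h hh
      refine ⟨(pa h hh).2, ?_⟩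
      rw [inv_inv]
      exact (pa h hh).1
  -- produce infinitely many elements of the support
  have hne' : d ≠ 0 := fun h => hne (by rwa [hd] at h)
  obtain ⟨c, hc⟩ := Finsupp.support_nonempty_iff.mpr hne'
  obtain ⟨h₀, rfl⟩ := QuotientGroup.mk_surjective c
  have hsub : (fun c : H ⧸ U => h₀ • c) '' ((fun h : H => (h : H ⧸ U)) ''
      ((Subgroup.closure (Set.range g) : Subgroup H) : Set H)) ⊆ ↑d.support := by
    rintro _ ⟨_, ⟨w, hw, rfl⟩, rfl⟩
    exact (hclos w hw h₀ hc).1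
  have hinfim : Set.Infinite ((fun c : H ⧸ U => h₀ • c) '' ((fun h : H => (h : H ⧸ U)) ''
      ((Subgroup.closure (Set.range g) : Subgroup H) : Set H))) :=
    hinf.image (MulAction.injective h₀).injOn
  exact hinfim (Set.Finite.subset d.support.finite_toSet hsub)
end

section
/- Let φ : H₂ → H₁ be a continuous homomorphism of topological groups with dense image. Then the pull-back functor φ* on smooth representations admits a right adjoint φ_* given by φ_*(W) = ⋃_U W^{φ^{-1}(U)}, the union over open subgroups U of H₁, where the H₁-action on φ_*(W) is defined by σ·w := σ'·w for any σ' ∈ H₂ with φ(σ') ∈ σU (U an open subgroup of H₁ fixing w), and this is well defined. In particular, φ* preserves irreducibility of smooth representations. -/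
/-- for a continuous homomorphism `φ : H₂ → H₁` with dense image, the
smooth push-forward `φ_* W = ⋃_U W^{φ⁻¹(U)}` carries a well-defined `H₁`-action
`σ • w := σ' • w` for any `σ'` with `φ(σ') ∈ σU`; and `φ*` preserves irreducibility
of smooth representations. -/
theorem stmt_15 {H₁ H₂ : Type*} [Group H₁] [TopologicalSpace H₁] [IsTopologicalGroup H₁]
    [Group H₂] [TopologicalSpace H₂] [IsTopologicalGroup H₂]
    (φ : H₂ →* H₁) (hc : Continuous ⇑φ) (hd : DenseRange ⇑φ)
    {W : Type*} [MulAction H₂ W]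
    (hWsm : ∀ w : W, IsOpen {τ : H₂ | τ • w = w})
    {V : Type*} [AddCommGroup V] [DistribMulAction H₁ V]
    (hVsm : ∀ v : V, IsOpen {h : H₁ | h • v = v}) :
    -- well-definedness of the action of `H₁` on `φ_* W`
    (∀ (U : Subgroup H₁) (w : W), (∀ τ : H₂, φ τ ∈ U → τ • w = w) →
      ∀ (σ : H₁) (σ' σ'' : H₂), (∃ u ∈ U, φ σ' = σ * u) → (∃ u ∈ U, φ σ'' = σ * u) →
        σ' • w = σ'' • w) ∧
    -- existence of the action map on `φ_* W = ⋃_U W^{φ⁻¹(U)}`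
    (∃ smul₁ : H₁ → {w : W // ∃ U : Subgroup H₁, IsOpen (U : Set H₁) ∧
        ∀ τ : H₂, φ τ ∈ U → τ • w = w} → W,
      ∀ (σ : H₁) (w : {w : W // ∃ U : Subgroup H₁, IsOpen (U : Set H₁) ∧
          ∀ τ : H₂, φ τ ∈ U → τ • w = w}) (U : Subgroup H₁), IsOpen (U : Set H₁) →
        (∀ τ : H₂, φ τ ∈ U → τ • (w : W) = (w : W)) →
        ∀ σ' : H₂, (∃ u ∈ U, φ σ' = σ * u) → smul₁ σ w = σ' • (w : W)) ∧
    -- `φ*` preserves irreducibility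
    ((∀ S : AddSubgroup V, (∀ (h : H₁) x, x ∈ S → h • x ∈ S) → S = ⊥ ∨ S = ⊤) →
      ∀ S : AddSubgroup V, (∀ (τ : H₂) x, x ∈ S → φ τ • x ∈ S) → S = ⊥ ∨ S = ⊤) := by
  have key : ∀ (U : Subgroup H₁) (w : W), (∀ τ : H₂, φ τ ∈ U → τ • w = w) →
      ∀ (σ : H₁) (σ' σ'' : H₂), (∃ u ∈ U, φ σ' = σ * u) → (∃ u ∈ U, φ σ'' = σ * u) →
        σ' • w = σ'' • w := by
    rintro U w hw σ σ' σ'' ⟨u, hu, h1⟩ ⟨v, hv, h2⟩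
    have hm : φ (σ''⁻¹ * σ') ∈ U := by
      have h3 : φ (σ''⁻¹ * σ') = v⁻¹ * u := by
        rw [map_mul, map_inv, h1, h2]; group
      rw [h3]; exact U.mul_mem (U.inv_mem hv) hu
    have h := hw _ hm
    rw [mul_smul, inv_smul_eq_iff] at h
    exact h
  refine ⟨key, ?_, ?_⟩
  · have hex : ∀ (σ : H₁) (w : {w : W // ∃ U : Subgroup H₁, IsOpen (U : Set H₁) ∧
        ∀ τ : H₂, φ τ ∈ U → τ • w = w}),
        ∃ (σ' : H₂) (U : Subgroup H₁), IsOpen (U : Set H₁) ∧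
          (∀ τ : H₂, φ τ ∈ U → τ • (w : W) = (w : W)) ∧ ∃ u ∈ U, φ σ' = σ * u := by
      intro σ w
      obtain ⟨U, hUo, hUfix⟩ := w.2
      have hopen : IsOpen {x : H₁ | σ⁻¹ * x ∈ U} :=
        hUo.preimage (continuous_const.mul continuous_id)
      have hne : ({x : H₁ | σ⁻¹ * x ∈ U} : Set H₁).Nonempty :=
        ⟨σ, by simp [Set.mem_setOf_eq, U.one_mem]⟩
      obtain ⟨τ, hτ⟩ := hd.exists_mem_open hopen hne
      exact ⟨τ, U, hUo, hUfix, σ⁻¹ * φ τ, hτ, by group⟩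
    choose f Uf hUo hUfix hfu using hex
    refine ⟨fun σ w => f σ w • (w : W), ?_⟩
    intro σ w U' hU'o hU'f σ' hσ'
    have hopen : IsOpen {x : H₁ | σ⁻¹ * x ∈ Uf σ w ⊓ U'} := by
      have h1 : IsOpen ((Uf σ w ⊓ U' : Subgroup H₁) : Set H₁) := by
        rw [Subgroup.coe_inf]; exact (hUo σ w).inter hU'o
      exact h1.preimage (continuous_const.mul continuous_id)
    have hne : ({x : H₁ | σ⁻¹ * x ∈ Uf σ w ⊓ U'} : Set H₁).Nonempty :=
      ⟨σ, by simp [Set.mem_setOf_eq, Subgroup.one_mem]⟩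
    obtain ⟨τ, hτ⟩ := hd.exists_mem_open hopen hne
    have hτ' : σ⁻¹ * φ τ ∈ Uf σ w ⊓ U' := hτ
    have e1 : f σ w • (w : W) = τ • (w : W) :=
      key (Uf σ w) w (hUfix σ w) σ (f σ w) τ (hfu σ w)
        ⟨σ⁻¹ * φ τ, hτ'.1, by group⟩
    have e2 : τ • (w : W) = σ' • (w : W) :=
      key U' w hU'f σ τ σ' ⟨σ⁻¹ * φ τ, hτ'.2, by group⟩ hσ'
    exact e1.trans e2
  · intro hirr S hS
    apply hirr
    intro h x hx
    have hstab : IsOpen {g : H₁ | g • x = h • x} := by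
      have heq : {g : H₁ | g • x = h • x} = (fun g => h⁻¹ * g) ⁻¹' {g : H₁ | g • x = x} := by
        ext g
        simp only [Set.mem_setOf_eq, Set.mem_preimage, mul_smul, inv_smul_eq_iff]
      rw [heq]
      exact (hVsm x).preimage (continuous_const.mul continuous_id)
    obtain ⟨τ, hτ⟩ := hd.exists_mem_open hstab ⟨h, rfl⟩
    rw [← hτ]
    exact hS τ x hx
end

section
/- Let H be a totally disconnected group with base of open subgroups B, W a smooth representation of H, and U ⊆ H a subgroup. Let {U_α} be a family of subgroups, each containing U, directed downwards and filtering for the neighbourhoods of the identity coset in H/closure(U). Then for cohomology computed by an injective resolution I• of W in the category of smooth representations, the natural map colim_α H^q((I•)^{U_α}) → H^q((I•)^U) is an isomorphism for all q; in particular colim_α H^q_{Sm_H}(U_α, W) ≅ H^q_{Sm_H}(U, W). -/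
/-- for a complex `(A•, δ)` of smooth `H`-modules (e.g. an injective
resolution of `W`), a subgroup `U` and a downward-directed family `{U_α}` of subgroups
containing `U` which is filtering for the neighbourhoods of the identity coset of
`H/closure(U)`, one has `(A^n)^U = colim_α (A^n)^{U_α}` and the natural map
`colim_α H^q((A•)^{U_α}) → H^q((A•)^U)` is an isomorphism (the last two clauses are
the surjectivity and injectivity of this map, stated elementwise). -/
theorem stmt_17 {H : Type*} [Group H] [TopologicalSpace H] [IsTopologicalGroup H]
    {A : ℕ → Type*} [∀ n, AddCommGroup (A n)] [∀ n, DistribMulAction H (A n)]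
    (hsm : ∀ n (x : A n), IsOpen {h : H | h • x = x})
    (δ : ∀ n, A n →+ A (n + 1))
    (hδ : ∀ n (h : H) (x : A n), δ n (h • x) = h • δ n x)
    (hδδ : ∀ n (x : A n), δ (n + 1) (δ n x) = 0)
    (U : Subgroup H) {κ : Type*} (Uα : κ → Subgroup H)
    (hUle : ∀ a, U ≤ Uα a)
    (hdir : ∀ a b, ∃ c, Uα c ≤ Uα a ∧ Uα c ≤ Uα b)
    (hfilter : ∀ V : Set H, IsOpen V → (1 : H) ∈ V →
      (∀ v ∈ V, ∀ u ∈ closure (U : Set H), v * u ∈ V) → ∃ a, (Uα a : Set H) ⊆ V) :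
    (∀ n (x : A n), (∀ u ∈ U, u • x = x) → ∃ a, ∀ u ∈ Uα a, u • x = x) ∧
    (∀ q (x : A (q + 1)), (∀ u ∈ U, u • x = x) → δ (q + 1) x = 0 →
      ∃ (a : κ) (y : A (q + 1)), (∀ u ∈ Uα a, u • y = y) ∧ δ (q + 1) y = 0 ∧
        ∃ z : A q, (∀ u ∈ U, u • z = z) ∧ δ q z = x - y) ∧
    (∀ q a (y : A (q + 1)), (∀ u ∈ Uα a, u • y = y) → δ (q + 1) y = 0 →
      (∃ z : A q, (∀ u ∈ U, u • z = z) ∧ δ q z = y) →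
      ∃ b, Uα b ≤ Uα a ∧ ∃ z' : A q, (∀ u ∈ Uα b, u • z' = z') ∧ δ q z' = y) := by
  have key : ∀ n (x : A n), (∀ u ∈ U, u • x = x) → ∃ a, ∀ u ∈ Uα a, u • x = x := by
    intro n x hx
    -- the stabilizer of x as a subgroup
    set S : Subgroup H :=
      { carrier := {h : H | h • x = x}
        one_mem' := one_smul H x
        mul_mem' := by
          intro p q hp hq
          show (p * q) • x = x
          rw [mul_smul, hq, hp]
        inv_mem' := by
          intro p hp
          show p⁻¹ • x = x
          conv_lhs => rw [← hp]
          rw [← mul_smul, inv_mul_cancel, one_smul] } with hS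
    have hopen : IsOpen (S : Set H) := hsm n x
    have hclosed : IsClosed (S : Set H) := S.isClosed_of_isOpen hopen
    have hUS : (U : Set H) ⊆ (S : Set H) := fun u hu => hx u hu
    have hclU : closure (U : Set H) ⊆ (S : Set H) := by
      rw [← hclosed.closure_eq]; exact closure_mono hUS
    obtain ⟨a, ha⟩ := hfilter (S : Set H) hopen S.one_mem
      (fun v hv u hu => S.mul_mem hv (hclU hu))
    exact ⟨a, fun u hu => ha hu⟩
  refine ⟨key, ?_, ?_⟩
  · intro q x hx hdx
    obtain ⟨a, ha⟩ := key _ x hx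
    exact ⟨a, x, ha, hdx, 0, fun u _ => smul_zero u, by simp⟩
  · intro q a y hy hdy ⟨z, hz, hdz⟩
    obtain ⟨b', hb'⟩ := key _ z hz
    obtain ⟨b, hba, hbb'⟩ := hdir a b'
    exact ⟨b, hba, z, fun u hu => hb' u (hbb' hu), hdz⟩
end
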